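/- For every r > 0 and every x with 0 ≤ x ≤ π, one has r·H_I(r,x) ≤ π − x. -/

import Mathlib

open Real

/-- The annulus function `J(r,x) = (π²/(2r²)) ∑_{k ∈ ℤ} cosh(π(x+2kπ)/(2r))⁻²`. -/
noncomputable def Jfun (r x : ℝ) : ℝ :=
  (π ^ 2 / (2 * r ^ 2)) * ∑' k : ℤ, ((Real.cosh (π * (x + 2 * (k : ℝ) * π) / (2 * r))) ^ 2)⁻¹

/-- `H_I(r,x) = ∫_0^x (J(r,y) - 1/r) dy`. -/
noncomputable def HI (r x : ℝ) : ℝ := ∫ y in (0:ℝ)..x, (Jfun r y - 1 / r)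

open Real MeasureTheory Filter Topology Set intervalIntegral

noncomputable def gg (a t : ℝ) : ℝ := ((Real.cosh (a * t)) ^ 2)⁻¹

lemma gg_nonneg (a t : ℝ) : 0 ≤ gg a t := inv_nonneg.2 (sq_nonneg _)

lemma gg_even (a t : ℝ) : gg a (-t) = gg a t := by simp [gg, mul_neg, Real.cosh_neg]

lemma gg_cont (a : ℝ) : Continuous (gg a) :=
  (((Real.continuous_cosh.comp (continuous_const.mul continuous_id)).pow 2).inv₀
    (fun t => pow_ne_zero 2 (Real.cosh_pos _).ne'))

lemma tanh_hasDerivAt (x : ℝ) : HasDerivAt Real.tanh ((Real.cosh x ^ 2)⁻¹) x := by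
  have h : HasDerivAt (fun y => Real.sinh y / Real.cosh y)
      ((Real.cosh x * Real.cosh x - Real.sinh x * Real.sinh x) / (Real.cosh x) ^ 2) x :=
    (Real.hasDerivAt_sinh x).div (Real.hasDerivAt_cosh x) (ne_of_gt (Real.cosh_pos x))
  have e : (Real.cosh x * Real.cosh x - Real.sinh x * Real.sinh x) / (Real.cosh x) ^ 2
      = ((Real.cosh x) ^ 2)⁻¹ := by
    rw [show Real.cosh x * Real.cosh x - Real.sinh x * Real.sinh x
        = Real.cosh x ^ 2 - Real.sinh x ^ 2 by ring, Real.cosh_sq_sub_sinh_sq, one_div]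
  have ht : Real.tanh = fun y => Real.sinh y / Real.cosh y :=
    funext fun y => Real.tanh_eq_sinh_div_cosh y
  rw [ht]
  exact e ▸ h

lemma tanh_key (x : ℝ) : Real.tanh x = 1 - 2 / (Real.exp (2 * x) + 1) := by
  rw [Real.tanh_eq_sinh_div_cosh, Real.sinh_eq, Real.cosh_eq]
  have h1 : (0:ℝ) < Real.exp x := Real.exp_pos x
  have h2 : Real.exp (2 * x) = Real.exp x * Real.exp x := by rw [two_mul, Real.exp_add]
  have h3 : Real.exp (-x) = (Real.exp x)⁻¹ := Real.exp_neg x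
  rw [h2, h3]
  have h4 : Real.exp x * Real.exp x + 1 > 0 := by positivity
  field_simp
  ring

lemma tendsto_tanh_atTop : Tendsto Real.tanh atTop (𝓝 1) := by
  have h2 : Tendsto (fun x : ℝ => Real.exp (2 * x) + 1) atTop atTop :=
    tendsto_atTop_add_const_right _ 1
      (Real.tendsto_exp_atTop.comp (tendsto_id.const_mul_atTop two_pos))
  have h0 : Tendsto (fun x : ℝ => 2 / (Real.exp (2 * x) + 1)) atTop (𝓝 0) :=
    Tendsto.div_atTop tendsto_const_nhds h2
  have := (tendsto_const_nhds : Tendsto (fun _ : ℝ => (1:ℝ)) atTop (𝓝 1)).sub h0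
  rw [sub_zero] at this
  exact this.congr fun x => (tanh_key x).symm

lemma tendsto_tanh_atBot : Tendsto Real.tanh atBot (𝓝 (-1)) := by
  have h := (tendsto_tanh_atTop.comp tendsto_neg_atBot_atTop).neg
  exact h.congr fun x => by simp [Function.comp, Real.tanh_neg]

lemma F_hasDerivAt {a : ℝ} (ha : 0 < a) (t : ℝ) :
    HasDerivAt (fun s => Real.tanh (a * s) / a) (gg a t) t := by
  have h1 : HasDerivAt (fun s : ℝ => a * s) a t := by
    simpa using (hasDerivAt_id t).const_mul a
  have h2 := (tanh_hasDerivAt (a * t)).comp t h1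
  have h3 := h2.div_const a
  exact h3.congr_deriv (by rw [gg, mul_div_assoc, div_self ha.ne', mul_one])

lemma F_tendsto_top {a : ℝ} (ha : 0 < a) :
    Tendsto (fun s => Real.tanh (a * s) / a) atTop (𝓝 (1 / a)) := by
  exact (tendsto_tanh_atTop.comp (tendsto_id.const_mul_atTop ha)).div_const a

lemma gg_integrableOn_Ioi {a : ℝ} (ha : 0 < a) : IntegrableOn (gg a) (Ioi 0) :=
  integrableOn_Ioi_deriv_of_nonneg' (fun x _ => F_hasDerivAt ha x)
    (fun x _ => gg_nonneg a x) (F_tendsto_top ha)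

lemma gg_integral_Ioi {a : ℝ} (ha : 0 < a) : ∫ t in Ioi 0, gg a t = 1 / a := by
  rw [integral_Ioi_of_hasDerivAt_of_nonneg' (fun x _ => F_hasDerivAt ha x)
    (fun x _ => gg_nonneg a x) (F_tendsto_top ha)]
  simp

lemma gg_integrable {a : ℝ} (ha : 0 < a) : Integrable (gg a) := by
  rw [← integrableOn_univ, ← Set.Iio_union_Ici (a := (0:ℝ)), integrableOn_union,
    integrableOn_Ici_iff_integrableOn_Ioi]
  refine ⟨?_, gg_integrableOn_Ioi ha⟩
  rw [← (Measure.measurePreserving_neg (volume : Measure ℝ)).integrableOn_comp_preimage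
      (Homeomorph.neg ℝ).measurableEmbedding]
  simp only [Function.comp_def, neg_preimage, neg_Iio, neg_neg, neg_zero]
  exact (gg_integrableOn_Ioi ha).congr_fun (fun x _ => (gg_even a x).symm) measurableSet_Ioi

lemma gg_integral {a : ℝ} (ha : 0 < a) : ∫ t, gg a t = 2 / a := by
  have h1 : ∫ t in Iic (0:ℝ), gg a t = 1 / a := by
    have : ∫ t in Iic (0:ℝ), gg a t = ∫ t in Iic (0:ℝ), gg a (-t) := by
      simp [gg_even]
    rw [this, integral_comp_neg_Iic, neg_zero, gg_integral_Ioi ha]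
  have h2 := gg_integral_Ioi ha
  have h3 : ∫ t, gg a t = (∫ t in Iic (0:ℝ), gg a t) + ∫ t in Ioi (0:ℝ), gg a t :=
    (integral_Iic_add_Ioi ((gg_integrable ha).integrableOn) ((gg_integrable ha).integrableOn)).symm
  rw [h3, h1, h2]; ring

lemma gg_tiling {a : ℝ} (ha : 0 < a) :
    HasSum (fun n : ℤ => ∫ y in (-π)..π, gg a (y + 2 * (n:ℝ) * π)) (2 / a) := by
  have h2π : (2 * π) ≠ 0 := by positivity
  have hh : Integrable (fun t : ℝ => gg a (2 * π * t)) :=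
    (gg_integrable ha).comp_mul_left' h2π
  have hs := hh.hasSum_intervalIntegral (-(1/2 : ℝ))
  have hs2 := hs.const_smul (2 * π)
  have hval : (2 * π) • ∫ t : ℝ, gg a (2 * π * t) = ∫ t : ℝ, gg a t := by
    rw [MeasureTheory.Measure.integral_comp_mul_left (gg a) (2 * π)]
    rw [smul_smul]
    rw [abs_of_pos (by positivity : (0:ℝ) < (2*π)⁻¹)]
    rw [mul_inv_cancel₀ h2π, one_smul]
  rw [hval, gg_integral ha] at hs2
  refine hs2.congr_fun fun n => ?_
  have h1 : (2 * π) • ∫ t in (-(1/2:ℝ)) + n..(-(1/2:ℝ)) + n + 1, gg a (2 * π * t)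
      = ∫ t in (2*π) * ((-(1/2:ℝ)) + n)..(2*π) * ((-(1/2:ℝ)) + n + 1), gg a t :=
    intervalIntegral.smul_integral_comp_mul_left (gg a) (2*π)
  rw [h1, intervalIntegral.integral_comp_add_right (fun y => gg a y) (2 * (n:ℝ) * π)]
  norm_num
  ring_nf

lemma gg_le_exp {a : ℝ} (ha : 0 < a) (t : ℝ) :
    gg a t ≤ 4 * Real.exp (-(2 * a) * |t|) := by
  set e := Real.exp (a * |t|) with he
  have hepos : 0 < e := Real.exp_pos _
  have h1 : e ≤ 2 * Real.cosh (a * t) := by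
    rw [Real.cosh_eq, he]
    rcases le_total 0 t with h | h
    · rw [abs_of_nonneg h]
      have := Real.exp_pos (-(a*t))
      have h2 : Real.exp (a * t) ≤ Real.exp (a*t) + Real.exp (-(a*t)) := by linarith
      linarith
    · rw [abs_of_nonpos h]
      have := Real.exp_pos (a*t)
      have h2 : Real.exp (a * -t) = Real.exp (-(a*t)) := by ring_nf
      rw [h2]
      linarith
  have hexp : Real.exp (-(2 * a) * |t|) = (e * e)⁻¹ := by
    rw [he, ← Real.exp_add, ← Real.exp_neg]
    ring_nf
  rw [hexp]
  have hc := Real.cosh_pos (a * t)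
  have hsq : e * e ≤ 4 * (Real.cosh (a*t))^2 := by nlinarith
  rw [gg]
  rw [← div_eq_mul_inv, le_div_iff₀ (by positivity), inv_mul_eq_div, div_le_iff₀ (by positivity)]
  nlinarith

lemma gg_bound {a : ℝ} (ha : 0 < a) (k : ℤ) (y : ℝ) (hy : |y| ≤ π) :
    gg a (y + 2 * (k:ℝ) * π) ≤ 4 * Real.exp (-(2 * a * π)) ^ k.natAbs := by
  have hπ := Real.pi_pos
  have hmain : π * (k.natAbs : ℝ) ≤ |y + 2 * (k:ℝ) * π| := by
    rcases eq_or_ne k 0 with rfl | hk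
    · simp [abs_nonneg]
    · have hm1 : (1:ℝ) ≤ (k.natAbs : ℝ) := by
        have h : 1 ≤ k.natAbs := Int.natAbs_pos.mpr hk
        exact_mod_cast h
      have habs : |2 * (k:ℝ) * π| = 2 * π * (k.natAbs : ℝ) := by
        rw [abs_mul, abs_mul]
        rw [abs_of_pos hπ, abs_of_pos (by norm_num : (0:ℝ) < 2)]
        rw [Nat.cast_natAbs]
        push_cast
        ring
      have h2 : |2 * (k:ℝ) * π| ≤ |y + 2 * (k:ℝ) * π| + |y| := by
        calc |2 * (k:ℝ) * π| = |(y + 2 * (k:ℝ) * π) + (-y)| := by ring_nf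
        _ ≤ |y + 2 * (k:ℝ) * π| + |(-y)| := abs_add_le _ _
        _ = |y + 2 * (k:ℝ) * π| + |y| := by rw [abs_neg]
      rw [habs] at h2
      nlinarith
  calc gg a (y + 2 * (k:ℝ) * π) ≤ 4 * Real.exp (-(2 * a) * |y + 2 * (k:ℝ) * π|) :=
        gg_le_exp ha _
    _ ≤ 4 * Real.exp (-(2 * a * π)) ^ k.natAbs := by
        rw [← Real.exp_nat_mul]
        have : (k.natAbs : ℝ) * (-(2 * a * π)) = -(2 * a) * (π * (k.natAbs:ℝ)) := by ring
        rw [this]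
        have hle : -(2*a) * |y + 2 * (k:ℝ) * π| ≤ -(2*a) * (π * (k.natAbs:ℝ)) := by
          have h2a : (0:ℝ) < 2 * a := by linarith
          nlinarith
        have := Real.exp_le_exp.mpr hle
        linarith

lemma bound_summable {a : ℝ} (ha : 0 < a) :
    Summable (fun k : ℤ => 4 * Real.exp (-(2 * a * π)) ^ k.natAbs) := by
  have hπ := Real.pi_pos
  have hρ1 : Real.exp (-(2 * a * π)) < 1 := by
    rw [Real.exp_lt_one_iff]
    nlinarith
  have hρ0 : 0 ≤ Real.exp (-(2 * a * π)) := Real.exp_nonneg _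
  have hnat : Summable (fun n : ℕ => Real.exp (-(2 * a * π)) ^ n) :=
    summable_geometric_of_lt_one hρ0 hρ1
  have hint : Summable (fun k : ℤ => Real.exp (-(2 * a * π)) ^ k.natAbs) := by
    apply Summable.of_nat_of_neg
    · simpa using hnat
    · simpa using hnat
  exact hint.mul_left 4

noncomputable def Sa (a y : ℝ) : ℝ := ∑' k : ℤ, gg a (y + 2 * (k:ℝ) * π)

lemma Sa_nonneg (a y : ℝ) : 0 ≤ Sa a y := tsum_nonneg fun k => gg_nonneg a _

lemma Sa_summable {a : ℝ} (ha : 0 < a) {y : ℝ} (hy : |y| ≤ π) :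
    Summable (fun k : ℤ => gg a (y + 2 * (k:ℝ) * π)) :=
  Summable.of_nonneg_of_le (fun k => gg_nonneg a _) (fun k => gg_bound ha k y hy)
    (bound_summable ha)

lemma Sa_continuousOn {a : ℝ} (ha : 0 < a) : ContinuousOn (Sa a) (Icc (-π) π) := by
  apply continuousOn_tsum
    (u := fun k : ℤ => 4 * Real.exp (-(2 * a * π)) ^ k.natAbs)
  · intro k
    exact ((gg_cont a).comp (continuous_id.add continuous_const)).continuousOn
  · exact bound_summable ha
  · intro k y hy
    rw [Real.norm_eq_abs, abs_of_nonneg (gg_nonneg a _)]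
    exact gg_bound ha k y (abs_le.mpr ⟨hy.1, hy.2⟩)

lemma Sa_even {a : ℝ} (y : ℝ) : Sa a (-y) = Sa a y := by
  rw [Sa, Sa, ← (Equiv.neg ℤ).tsum_eq (fun k : ℤ => gg a (y + 2 * (k:ℝ) * π))]
  apply tsum_congr
  intro k
  simp only [Equiv.neg_apply, Int.cast_neg]
  rw [← gg_even a (y + 2 * -(k:ℝ) * π)]
  ring_nf

lemma Sa_interchange {a : ℝ} (ha : 0 < a) :
    HasSum (fun k : ℤ => ∫ y in (-π)..π, gg a (y + 2 * (k:ℝ) * π))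
      (∫ y in (-π)..π, Sa a y) := by
  have hπ := Real.pi_pos
  apply intervalIntegral.hasSum_integral_of_dominated_convergence
    (bound := fun (k : ℤ) (_ : ℝ) => 4 * Real.exp (-(2 * a * π)) ^ k.natAbs)
  · intro k
    exact ((gg_cont a).comp (continuous_id.add continuous_const)).aestronglyMeasurable
  · intro k
    apply ae_of_all
    intro t ht
    have ht' : t ∈ Set.Ioc (-π) π := by
      rwa [Set.uIoc_of_le (by linarith : -π ≤ π)] at ht
    rw [Real.norm_eq_abs, abs_of_nonneg (gg_nonneg a _)]
    exact gg_bound ha k t (abs_le.mpr ⟨ht'.1.le, ht'.2⟩)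
  · exact ae_of_all _ fun t _ => bound_summable ha
  · exact intervalIntegrable_const
  · apply ae_of_all
    intro t ht
    have ht' : t ∈ Set.Ioc (-π) π := by
      rwa [Set.uIoc_of_le (by linarith : -π ≤ π)] at ht
    exact (Sa_summable ha (abs_le.mpr ⟨ht'.1.le, ht'.2⟩)).hasSum

lemma Sa_integral {a : ℝ} (ha : 0 < a) : ∫ y in (0:ℝ)..π, Sa a y = 1 / a := by
  have hπ := Real.pi_pos
  have htot : ∫ y in (-π)..π, Sa a y = 2 / a :=
    (Sa_interchange ha).unique (gg_tiling ha)
  have hint1 : IntervalIntegrable (Sa a) volume (-π) 0 := by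
    apply ContinuousOn.intervalIntegrable
    apply (Sa_continuousOn ha).mono
    rw [Set.uIcc_of_le (by linarith : -π ≤ (0:ℝ))]
    exact Set.Icc_subset_Icc le_rfl (by linarith)
  have hint2 : IntervalIntegrable (Sa a) volume 0 π := by
    apply ContinuousOn.intervalIntegrable
    apply (Sa_continuousOn ha).mono
    rw [Set.uIcc_of_le (by linarith : (0:ℝ) ≤ π)]
    exact Set.Icc_subset_Icc (by linarith) le_rfl
  have hsplit := intervalIntegral.integral_add_adjacent_intervals hint1 hint2
  have hrefl : ∫ y in (-π)..(0:ℝ), Sa a y = ∫ y in (0:ℝ)..π, Sa a y := by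
    have h1 : ∫ y in (0:ℝ)..π, Sa a (-y) = ∫ y in (-π)..(0:ℝ), Sa a y := by
      rw [intervalIntegral.integral_comp_neg (Sa a)]
      norm_num
    rw [← h1]
    apply intervalIntegral.integral_congr
    intro y _
    exact Sa_even y
  rw [hrefl] at hsplit
  rw [htot] at hsplit
  have h2 : (2:ℝ)/a = 2*(1/a) := by ring
  linarith

/-- For every `r > 0` and `0 ≤ x ≤ π`, `r·H_I(r,x) ≤ π - x`. -/
theorem stmt4 : ∀ r : ℝ, 0 < r → ∀ x : ℝ, 0 ≤ x → x ≤ π →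
    r * HI r x ≤ π - x := by
  intro r hr x hx0 hxπ
  have hπ := Real.pi_pos
  set a : ℝ := π / (2 * r) with ha_def
  have ha : 0 < a := by positivity
  have hJ : Jfun r = fun y => (π ^ 2 / (2 * r ^ 2)) * Sa a y := by
    funext y
    rw [Jfun, Sa]
    congr 1
    apply tsum_congr
    intro k
    have harg : π * (y + 2 * (k:ℝ) * π) / (2 * r) = a * (y + 2 * (k:ℝ) * π) := by
      rw [ha_def]; ring
    rw [harg, gg]
  set c : ℝ := π ^ 2 / (2 * r ^ 2) with hc_def
  have hc : 0 ≤ c := by positivity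
  have hJint : IntervalIntegrable (Jfun r) volume 0 π := by
    rw [hJ]
    apply ContinuousOn.intervalIntegrable
    apply (continuousOn_const.mul (Sa_continuousOn ha)).mono
    rw [Set.uIcc_of_le (by linarith : (0:ℝ) ≤ π)]
    exact Set.Icc_subset_Icc (by linarith) le_rfl
  have hsub1 : Set.uIcc (0:ℝ) x ⊆ Set.uIcc (0:ℝ) π := by
    rw [Set.uIcc_of_le hx0, Set.uIcc_of_le (by linarith : (0:ℝ) ≤ π)]
    exact Set.Icc_subset_Icc le_rfl hxπ
  have hsub2 : Set.uIcc x π ⊆ Set.uIcc (0:ℝ) π := by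
    rw [Set.uIcc_of_le hxπ, Set.uIcc_of_le (by linarith : (0:ℝ) ≤ π)]
    exact Set.Icc_subset_Icc hx0 le_rfl
  have hJx : IntervalIntegrable (Jfun r) volume 0 x := hJint.mono_set hsub1
  have hJxπ : IntervalIntegrable (Jfun r) volume x π := hJint.mono_set hsub2
  -- value of the full integral
  have hval : ∫ y in (0:ℝ)..π, Jfun r y = π / r := by
    rw [hJ, intervalIntegral.integral_const_mul, Sa_integral ha, hc_def, ha_def]
    field_simp
  -- tail nonneg
  have htail : 0 ≤ ∫ y in x..π, Jfun r y := by
    apply intervalIntegral.integral_nonneg hxπ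
    intro y _
    rw [hJ]
    exact mul_nonneg hc (Sa_nonneg a y)
  have hsplit := intervalIntegral.integral_add_adjacent_intervals hJx hJxπ
  have hle : ∫ y in (0:ℝ)..x, Jfun r y ≤ π / r := by
    rw [← hval, ← hsplit]
    linarith
  -- HI
  have hHI : HI r x = (∫ y in (0:ℝ)..x, Jfun r y) - x * (1/r) := by
    rw [HI, intervalIntegral.integral_sub hJx intervalIntegrable_const,
      intervalIntegral.integral_const]
    simp [smul_eq_mul]
  rw [hHI]
  have h1 : r * ((∫ y in (0:ℝ)..x, Jfun r y) - x * (1/r)) 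
      = r * (∫ y in (0:ℝ)..x, Jfun r y) - x := by
    field_simp
  rw [h1]
  have h2 : r * (∫ y in (0:ℝ)..x, Jfun r y) ≤ r * (π / r) :=
    mul_le_mul_of_nonneg_left hle hr.le
  have h3 : r * (π / r) = π := by field_simp
  linarith
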